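/- Consider a jointly convex GNEP with N players, a nonempty set 𝒳 ⊆ ℝ^n, choice sets Xᵢ (projections of 𝒳), and preference maps Pᵢ : X → subsets of Xᵢ with open upper sections (each Pᵢ(x) is open). Define Kᵢ(x) = {zᵢ ∈ Xᵢ : (x₋ᵢ, zᵢ) ∈ 𝒳}, Tᵢ(x) = conv(𝒩_{conv∘Pᵢ}(x) ∩ Sᵢ[0,1]), and T(x) = ∏ᵢ Tᵢ(x). Then any solution x̃ of the Stampacchia variational inequality VI(T, 𝒳) (i.e., x̃ ∈ 𝒳 and there exists x̃* ∈ T(x̃) with ⟨x̃*, y − x̃⟩ ≥ 0 for all y ∈ 𝒳) satisfies Pᵢ(x̃) ∩ Kᵢ(x̃) = ∅ for all i, i.e., x̃ is a generalized Nash equilibrium. -/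

import Mathlib

open scoped RealInnerProductSpace

/-- Any solution of the variational inequality `VI(T, 𝒳)` is an equilibrium of the
jointly convex GNEP `Γ' = (𝒳, Kᵢ, Pᵢ)` when the preference maps have open upper
sections. -/
theorem VI_solution_is_GNE (ι : Type*) [Fintype ι] [DecidableEq ι] (n : ι → ℕ)
    (𝒳 : Set (∀ j, EuclideanSpace ℝ (Fin (n j)))) (h𝒳 : 𝒳.Nonempty)
    (Xs : ∀ i, Set (EuclideanSpace ℝ (Fin (n i))))
    -- the choice sets are the projections of `𝒳`
    (hproj : ∀ i, Xs i = (fun x => x i) '' 𝒳)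
    (P : ∀ i, (∀ j, EuclideanSpace ℝ (Fin (n j))) → Set (EuclideanSpace ℝ (Fin (n i))))
    (hPsub : ∀ i x, P i x ⊆ Xs i)
    -- open upper sections
    (hopen : ∀ i x, IsOpen (P i x))
    (K : ∀ i, (∀ j, EuclideanSpace ℝ (Fin (n j))) → Set (EuclideanSpace ℝ (Fin (n i))))
    (hK : ∀ i x, K i x = {z ∈ Xs i | Function.update x i z ∈ 𝒳})
    (T : ∀ i, (∀ j, EuclideanSpace ℝ (Fin (n j))) → Set (EuclideanSpace ℝ (Fin (n i))))
    (hT : ∀ i x, T i x = convexHull ℝ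
      ({w : EuclideanSpace ℝ (Fin (n i)) |
          ∀ z ∈ convexHull ℝ (P i x), ⟪w, z - x i⟫ ≤ 0} ∩
        Metric.sphere (0 : EuclideanSpace ℝ (Fin (n i))) 1))
    -- `xt` solves `VI(T, 𝒳)`
    (xt : ∀ j, EuclideanSpace ℝ (Fin (n j))) (hxt : xt ∈ 𝒳)
    (xts : ∀ j, EuclideanSpace ℝ (Fin (n j))) (hxts : ∀ i, xts i ∈ T i xt)
    (hVI : ∀ y ∈ 𝒳, 0 ≤ ∑ i, ⟪xts i, y i - xt i⟫) :
    ∀ i, P i xt ∩ K i xt = ∅ := by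
  intro i
  rw [Set.eq_empty_iff_forall_notMem]
  rintro z ⟨hzP, hzK⟩
  rw [hK] at hzK
  obtain ⟨hzX, hupd⟩ := hzK
  have hsum := hVI _ hupd
  have heq : ∑ j, ⟪xts j, (Function.update xt i z) j - xt j⟫ = ⟪xts i, z - xt i⟫ := by
    rw [Finset.sum_eq_single i]
    · simp
    · intro j _ hj
      rw [Function.update_of_ne hj]
      simp
    · simp
  rw [heq] at hsum
  have hC : Convex ℝ {w : EuclideanSpace ℝ (Fin (n i)) | ⟪w, z - xt i⟫ < 0} := by
    apply convex_halfSpace_lt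
    exact ⟨fun a b => inner_add_left _ _ _, fun c a => real_inner_smul_left _ _ c⟩
  have hsub : ({w : EuclideanSpace ℝ (Fin (n i)) |
        ∀ z' ∈ convexHull ℝ (P i xt), ⟪w, z' - xt i⟫ ≤ 0} ∩
        Metric.sphere (0 : EuclideanSpace ℝ (Fin (n i))) 1)
      ⊆ {w : EuclideanSpace ℝ (Fin (n i)) | ⟪w, z - xt i⟫ < 0} := by
    rintro w ⟨hwN, hws⟩
    obtain ⟨ε, hε, hball⟩ := Metric.isOpen_iff.mp (hopen i xt) z hzP
    have hwnorm : ‖w‖ = 1 := by simpa using hws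
    have hmem : z + (ε / 2) • w ∈ P i xt := by
      apply hball
      rw [Metric.mem_ball, dist_eq_norm]
      simp only [add_sub_cancel_left, norm_smul, hwnorm, mul_one, Real.norm_eq_abs,
        abs_of_pos (half_pos hε)]
      linarith
    have hle := hwN _ (subset_convexHull ℝ _ hmem)
    have hexp : ⟪w, z + (ε / 2) • w - xt i⟫ = ⟪w, z - xt i⟫ + (ε / 2) * ‖w‖ ^ 2 := by
      rw [add_sub_right_comm, inner_add_right, real_inner_smul_right,
        real_inner_self_eq_norm_sq]
    rw [hexp, hwnorm] at hle
    simp only [one_pow, mul_one] at hle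
    simp only [Set.mem_setOf_eq]
    linarith
  have hlt : xts i ∈ {w : EuclideanSpace ℝ (Fin (n i)) | ⟪w, z - xt i⟫ < 0} := by
    have h := hxts i
    rw [hT] at h
    exact convexHull_min hsub hC h
  simp only [Set.mem_setOf_eq] at hlt
  linarith
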